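/- Let G = (C ∪ I, E) be a split graph with clique C and independent set I, with minimum degree δ(G) ≥ 2, |C| ≥ 3, and γ_{×2}(G) ≥ 3. Then γ_m(G) = γ_{×2}(G), i.e., the minimum size of a 1-uniform edge monitoring set equals the minimum size of a double dominating set. -/

import Mathlib

/-- `S` is a 1-uniform edge monitoring set of `G`. -/
def edgeMonitoringSet {V : Type*} (G : SimpleGraph V) (S : Set V) : Prop :=
  ∀ x y, G.Adj x y → ∃ v ∈ S, G.Adj v x ∧ G.Adj v y

/-- `S` is a double dominating set of `G`: the closed neighborhood of every vertex
contains at least two vertices of `S`. -/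
def doubleDomSet {V : Type*} (G : SimpleGraph V) (S : Set V) : Prop :=
  ∀ x : V, 2 ≤ (insert x (G.neighborSet x) ∩ S).ncard

/-- In a graph with minimum degree at least 1 (here 2), every edge monitoring set is a
double dominating set. -/
lemma mono_to_dd {V : Type*} [Fintype V] (G : SimpleGraph V)
    (hdeg : ∀ v : V, 2 ≤ (G.neighborSet v).ncard)
    (S : Set V) (hS : edgeMonitoringSet G S) : doubleDomSet G S := by
  intro x
  have hne : (G.neighborSet x).Nonempty := by
    rw [Set.nonempty_iff_ne_empty]
    intro h
    have := hdeg x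
    rw [h] at this
    simp at this
  obtain ⟨a, ha⟩ := hne
  obtain ⟨v, hvS, hvx, -⟩ := hS x a ha
  obtain ⟨w, hwS, hwx, hwv⟩ := hS x v hvx.symm
  have hvw : v ≠ w := fun h => G.irrefl (h ▸ hwv)
  have h2 : ({v, w} : Set V).ncard = 2 := Set.ncard_pair hvw
  have hsub : ({v, w} : Set V) ⊆ insert x (G.neighborSet x) ∩ S := by
    intro z hz
    rcases hz with h | h
    · subst h
      exact ⟨Set.mem_insert_of_mem _ hvx.symm, hvS⟩
    · rw [Set.mem_singleton_iff] at h
      subst h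
      exact ⟨Set.mem_insert_of_mem _ hwx.symm, hwS⟩
  calc 2 = ({v, w} : Set V).ncard := h2.symm
    _ ≤ _ := Set.ncard_le_ncard hsub (Set.toFinite _)

lemma dd_to_mono {V : Type*} [Fintype V] (G : SimpleGraph V) (C I : Set V)
    (hcover : C ∪ I = Set.univ) (hdisj : C ∩ I = ∅)
    (hclique : G.IsClique C)
    (hindep : I.Pairwise (fun x y => ¬ G.Adj x y))
    (hdeg : ∀ v : V, 2 ≤ (G.neighborSet v).ncard)
    (hC3 : 3 ≤ C.ncard)
    (S : Set V) (hS : doubleDomSet G S) (hS3 : 3 ≤ S.ncard) :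
    ∃ T : Set V, edgeMonitoringSet G T ∧ T.ncard ≤ S.ncard := by
  classical
  have hmemCI : ∀ v : V, v ∈ C ∨ v ∈ I := by
    intro v
    have : v ∈ C ∪ I := hcover ▸ Set.mem_univ v
    exact this
  have hnotboth : ∀ v : V, v ∈ C → v ∈ I → False := by
    intro v h1 h2
    have : v ∈ C ∩ I := ⟨h1, h2⟩
    rw [hdisj] at this
    exact this
  -- neighbors of vertices in I lie in C
  have hIC : ∀ x ∈ I, G.neighborSet x ⊆ C := by
    intro x hx v hv
    rcases hmemCI v with h | h
    · exact h
    · exact absurd hv (by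
        intro hadj
        exact hindep hx h (G.ne_of_adj hadj) hadj)
  have hNne : ∀ x : V, (G.neighborSet x).Nonempty := by
    intro x
    rw [Set.nonempty_iff_ne_empty]
    intro h
    have := hdeg x
    rw [h] at this
    simp at this
  -- replacement function
  let f : V → V := fun x =>
    if h : (G.neighborSet x \ S).Nonempty then h.choose else (hNne x).choose
  have hfN : ∀ x, f x ∈ G.neighborSet x := by
    intro x
    by_cases h : (G.neighborSet x \ S).Nonempty
    · simp only [f, dif_pos h]
      exact h.choose_spec.1
    · simp only [f, dif_neg h]
      exact (hNne x).choose_spec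
  have hfS : ∀ x, (G.neighborSet x \ S).Nonempty → f x ∉ S := by
    intro x h
    simp only [f, dif_pos h]
    exact h.choose_spec.2
  -- the candidate set inside C
  set T0 : Set V := (S ∩ C) ∪ (f '' (S ∩ I)) with hT0def
  have hT0C : T0 ⊆ C := by
    intro v hv
    rcases hv with h | ⟨x, hx, rfl⟩
    · exact h.2
    · exact hIC x hx.2 (hfN x)
  -- double-intersection property on I
  have hkey : ∀ x ∈ I, 2 ≤ (T0 ∩ G.neighborSet x).ncard := by
    intro x hxI
    have hNsub : G.neighborSet x ∩ S ⊆ T0 ∩ G.neighborSet x := by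
      intro v hv
      exact ⟨Or.inl ⟨hv.2, hIC x hxI hv.1⟩, hv.1⟩
    by_cases hxS : x ∈ S
    · by_cases hrep : (G.neighborSet x \ S).Nonempty
      · -- f x ∉ S, and there is some neighbor of x in S
        have hdd := hS x
        have h1 : 1 < (insert x (G.neighborSet x) ∩ S).ncard := lt_of_lt_of_le one_lt_two hdd
        rw [Set.one_lt_ncard (Set.toFinite _)] at h1
        obtain ⟨a, ha, b, hb, hab⟩ := h1
        have hvex : ∃ v, v ∈ G.neighborSet x ∩ S := by
          by_cases hax : a = x
          · subst hax
            rcases hb.1 with h | h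
            · exact absurd h.symm hab
            · exact ⟨b, h, hb.2⟩
          · rcases ha.1 with h | h
            · exact absurd h hax
            · exact ⟨a, h, ha.2⟩
        obtain ⟨v, hv⟩ := hvex
        have hvT : v ∈ T0 ∩ G.neighborSet x := hNsub hv
        have hfT : f x ∈ T0 ∩ G.neighborSet x :=
          ⟨Or.inr ⟨x, ⟨hxS, hxI⟩, rfl⟩, hfN x⟩
        have hne : v ≠ f x := by
          intro h
          exact hfS x hrep (h ▸ hv.2)
        rw [show (2 : ℕ) = 1 + 1 from rfl]
        rw [Nat.add_one_le_iff, Set.one_lt_ncard (Set.toFinite _)]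
        exact ⟨v, hvT, f x, hfT, hne⟩
      · -- all neighbors of x are in S
        have hsub : G.neighborSet x ⊆ T0 ∩ G.neighborSet x := by
          intro v hv
          have hvS : v ∈ S := by
            by_contra hvs
            exact hrep ⟨v, hv, hvs⟩
          exact hNsub ⟨hv, hvS⟩
        exact le_trans (hdeg x) (Set.ncard_le_ncard hsub (Set.toFinite _))
    · have heq : insert x (G.neighborSet x) ∩ S = G.neighborSet x ∩ S :=
        Set.insert_inter_of_notMem hxS
      have := hS x
      rw [heq] at this
      exact le_trans this (Set.ncard_le_ncard hNsub (Set.toFinite _))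
  -- size bound
  have hT0size : T0.ncard ≤ S.ncard := by
    have h1 : T0.ncard ≤ (S ∩ C).ncard + (f '' (S ∩ I)).ncard := Set.ncard_union_le _ _
    have h2 : (f '' (S ∩ I)).ncard ≤ (S ∩ I).ncard := Set.ncard_image_le (Set.toFinite _)
    have hdisj' : Disjoint (S ∩ C) (S ∩ I) := by
      rw [Set.disjoint_left]
      intro v hv hv'
      exact hnotboth v hv.2 hv'.2
    have h3 : (S ∩ C) ∪ (S ∩ I) = S := by
      rw [← Set.inter_union_distrib_left, hcover, Set.inter_univ]
    have h4 : (S ∩ C).ncard + (S ∩ I).ncard = S.ncard := by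
      rw [← Set.ncard_union_eq hdisj' (Set.toFinite _) (Set.toFinite _), h3]
    omega
  -- enlarge to size ≥ 3 if necessary
  have hbig : ∃ T : Set V, T0 ⊆ T ∧ T ⊆ C ∧ 3 ≤ T.ncard ∧ T.ncard ≤ S.ncard := by
    by_cases h3 : 3 ≤ T0.ncard
    · exact ⟨T0, le_refl _, hT0C, h3, hT0size⟩
    · push_neg at h3
      obtain ⟨K, hK1, hK2, hK3⟩ :=
        Set.exists_subsuperset_card_eq hT0C (le_of_lt h3) hC3
      exact ⟨K, hK1, hK2, le_of_eq hK3.symm, hK3 ▸ hS3⟩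
  obtain ⟨T, hT0T, hTC, hT3, hTsize⟩ := hbig
  have hkeyT : ∀ x ∈ I, 2 ≤ (T ∩ G.neighborSet x).ncard := by
    intro x hx
    refine le_trans (hkey x hx) (Set.ncard_le_ncard ?_ (Set.toFinite _))
    exact Set.inter_subset_inter_left _ hT0T
  refine ⟨T, ?_, hTsize⟩
  -- T is an edge monitoring set
  intro x y hxy
  have hxyne : x ≠ y := G.ne_of_adj hxy
  -- helper for the mixed case
  have mixed : ∀ a b : V, a ∈ C → b ∈ I → G.Adj a b →
      ∃ v ∈ T, G.Adj v a ∧ G.Adj v b := by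
    intro a b haC hbI hab
    have h2 := hkeyT b hbI
    have : ∃ v ∈ T ∩ G.neighborSet b, v ≠ a := by
      by_contra hcon
      push_neg at hcon
      have hsub : T ∩ G.neighborSet b ⊆ {a} := fun v hv => hcon v hv
      have := Set.ncard_le_ncard hsub (Set.toFinite _)
      rw [Set.ncard_singleton] at this
      omega
    obtain ⟨v, ⟨hvT, hvN⟩, hva⟩ := this
    exact ⟨v, hvT, hclique (hTC hvT) haC hva, hvN.symm⟩
  rcases hmemCI x with hxC | hxI
  · rcases hmemCI y with hyC | hyI
    · -- both in C : use a third vertex of T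
      have : ∃ z ∈ T, z ≠ x ∧ z ≠ y := by
        by_contra hcon
        push_neg at hcon
        have hsub : T ⊆ {x, y} := by
          intro z hz
          rcases Classical.em (z = x) with h | h
          · exact Or.inl h
          · exact Or.inr (Set.mem_singleton_iff.mpr (hcon z hz h))
        have h1 := Set.ncard_le_ncard hsub (Set.toFinite _)
        have h2 : ({x, y} : Set V).ncard ≤ 2 := by
          refine le_trans (Set.ncard_insert_le _ _) ?_
          rw [Set.ncard_singleton]
        omega
      obtain ⟨z, hzT, hzx, hzy⟩ := this
      exact ⟨z, hzT, hclique (hTC hzT) hxC hzx, hclique (hTC hzT) hyC hzy⟩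
    · obtain ⟨v, hv1, hv2, hv3⟩ := mixed x y hxC hyI hxy
      exact ⟨v, hv1, hv2, hv3⟩
  · rcases hmemCI y with hyC | hyI
    · obtain ⟨v, hv1, hv2, hv3⟩ := mixed y x hyC hxI hxy.symm
      exact ⟨v, hv1, hv3, hv2⟩
    · exact absurd hxy (hindep hxI hyI hxyne)

theorem stmt10 {V : Type*} [Fintype V] (G : SimpleGraph V) (C I : Set V)
    (hcover : C ∪ I = Set.univ) (hdisj : C ∩ I = ∅)
    (hclique : G.IsClique C)
    (hindep : I.Pairwise (fun x y => ¬ G.Adj x y))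
    (hdeg : ∀ v : V, 2 ≤ (G.neighborSet v).ncard)
    (hC3 : 3 ≤ C.ncard)
    (hdd3 : 3 ≤ sInf {n : ℕ | ∃ S : Set V, doubleDomSet G S ∧ S.ncard = n}) :
    sInf {n : ℕ | ∃ S : Set V, edgeMonitoringSet G S ∧ S.ncard = n}
      = sInf {n : ℕ | ∃ S : Set V, doubleDomSet G S ∧ S.ncard = n} := by
  have huniv_dd : doubleDomSet G (Set.univ : Set V) := by
    intro x
    rw [Set.inter_univ]
    refine le_trans (hdeg x) (Set.ncard_le_ncard ?_ (Set.toFinite _))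
    exact Set.subset_insert _ _
  have hdd_ne : {n : ℕ | ∃ S : Set V, doubleDomSet G S ∧ S.ncard = n}.Nonempty :=
    ⟨(Set.univ : Set V).ncard, Set.univ, huniv_dd, rfl⟩
  obtain ⟨S₀, hS₀dd, hS₀card⟩ := Nat.sInf_mem hdd_ne
  have hS₀3 : 3 ≤ S₀.ncard := hS₀card ▸ hdd3
  obtain ⟨T, hTmon, hTle⟩ :=
    dd_to_mono G C I hcover hdisj hclique hindep hdeg hC3 S₀ hS₀dd hS₀3
  have hmono_ne : {n : ℕ | ∃ S : Set V, edgeMonitoringSet G S ∧ S.ncard = n}.Nonempty :=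
    ⟨T.ncard, T, hTmon, rfl⟩
  apply le_antisymm
  · calc sInf {n : ℕ | ∃ S : Set V, edgeMonitoringSet G S ∧ S.ncard = n}
        ≤ T.ncard := Nat.sInf_le ⟨T, hTmon, rfl⟩
      _ ≤ S₀.ncard := hTle
      _ = _ := hS₀card
  · obtain ⟨S₁, hS₁mon, hS₁card⟩ := Nat.sInf_mem hmono_ne
    have hS₁dd : doubleDomSet G S₁ := mono_to_dd G hdeg S₁ hS₁mon
    calc sInf {n : ℕ | ∃ S : Set V, doubleDomSet G S ∧ S.ncard = n}
        ≤ S₁.ncard := Nat.sInf_le ⟨S₁, hS₁dd, rfl⟩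
      _ = _ := hS₁card
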